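/- Let N ≡ 5 (mod 8) be square-free. In the order A = ℤ[√N], the ideal I₊ = (4, √N + 1) satisfies I₊² = 2·(4, √N − 1) (as ideals generated by the indicated elements); consequently the class of I₊ in the ideal class group of A has order 1 or 3. -/
import Mathlib

open Pointwise


/-- For squarefree `N ≡ 5 (mod 8)`, in the order `A = ℤ[√N]` (modelled as `Zsqrtd N`) the
ideal `I₊ = (4, √N + 1)` satisfies `I₊² = (2)·(4, √N − 1)`; consequently `I₊³` is a
principal ideal, so the class of `I₊` in the class group of `A` has order `1` or `3`. -/
theorem ideal_sq_eq_two_mul_conj (N : ℕ) (hsf : Squarefree N) (hN : N % 8 = 5) :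
    (Ideal.span {4, Zsqrtd.sqrtd + 1} : Ideal (Zsqrtd N)) ^ 2 =
        Ideal.span {2} * Ideal.span {4, Zsqrtd.sqrtd - 1} ∧
      ((Ideal.span {4, Zsqrtd.sqrtd + 1} : Ideal (Zsqrtd N)) ^ 3).IsPrincipal := by
  obtain ⟨k, hk⟩ : ∃ k : ℕ, N = 8 * k + 5 := ⟨N / 8, by omega⟩
  set s : Zsqrtd (N : ℤ) := Zsqrtd.sqrtd with hsdef
  have hs : s * s = 8 * (k : Zsqrtd (N : ℤ)) + 5 := by
    rw [hsdef, Zsqrtd.dmuld]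
    have : ((N : ℤ) : Zsqrtd (N : ℤ)) = ((N : ℕ) : Zsqrtd (N : ℤ)) := by push_cast; ring
    rw [this, hk]; push_cast; ring
  -- generators of the set product {4, s+1} * {4, s+1}
  have m4 : (4 : Zsqrtd (N : ℤ)) ∈ ({4, s + 1} : Set (Zsqrtd (N : ℤ))) := by simp
  have ms : (s + 1 : Zsqrtd (N : ℤ)) ∈ ({4, s + 1} : Set (Zsqrtd (N : ℤ))) := by simp
  have g1 : (4 * 4 : Zsqrtd (N : ℤ)) ∈
      Ideal.span (({4, s + 1} : Set (Zsqrtd (N : ℤ))) * {4, s + 1}) :=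
    Ideal.subset_span (Set.mul_mem_mul m4 m4)
  have g2 : (4 * (s + 1) : Zsqrtd (N : ℤ)) ∈
      Ideal.span (({4, s + 1} : Set (Zsqrtd (N : ℤ))) * {4, s + 1}) :=
    Ideal.subset_span (Set.mul_mem_mul m4 ms)
  have g3 : ((s + 1) * (s + 1) : Zsqrtd (N : ℤ)) ∈
      Ideal.span (({4, s + 1} : Set (Zsqrtd (N : ℤ))) * {4, s + 1}) :=
    Ideal.subset_span (Set.mul_mem_mul ms ms)
  have h8 : (8 : Zsqrtd (N : ℤ)) ∈
      Ideal.span (({4, s + 1} : Set (Zsqrtd (N : ℤ))) * {4, s + 1}) := by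
    have h : (8 : Zsqrtd (N : ℤ)) =
        (-(k : Zsqrtd (N : ℤ))) * (4 * 4) + (-1) * (4 * (s + 1)) + 2 * ((s + 1) * (s + 1)) := by
      linear_combination (-2 : Zsqrtd (N : ℤ)) * hs
    rw [h]
    exact add_mem (add_mem (Ideal.mul_mem_left _ _ g1) (Ideal.mul_mem_left _ _ g2))
      (Ideal.mul_mem_left _ _ g3)
  have h2s : (2 * (s - 1) : Zsqrtd (N : ℤ)) ∈
      Ideal.span (({4, s + 1} : Set (Zsqrtd (N : ℤ))) * {4, s + 1}) := by
    have h : (2 * (s - 1) : Zsqrtd (N : ℤ)) =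
        (s + 1) * (s + 1) + (-(k : Zsqrtd (N : ℤ)) - 1) * 8 := by
      linear_combination (-1 : Zsqrtd (N : ℤ)) * hs
    rw [h]
    exact add_mem g3 (Ideal.mul_mem_left _ _ h8)
  have key : (Ideal.span {4, s + 1} : Ideal (Zsqrtd (N : ℤ))) ^ 2 =
      Ideal.span {8, 2 * (s - 1)} := by
    rw [pow_two, Ideal.span_mul_span']
    apply le_antisymm
    · rw [Ideal.span_le]
      rintro x ⟨a, ha, b, hb, rfl⟩
      simp only [Set.mem_insert_iff, Set.mem_singleton_iff] at ha hb
      have mem : ∀ u v x : Zsqrtd (N : ℤ), u * 8 + v * (2 * (s - 1)) = x →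
          x ∈ (Ideal.span {8, 2 * (s - 1)} : Ideal (Zsqrtd (N : ℤ))) :=
        fun u v x h => Ideal.mem_span_pair.2 ⟨u, v, h⟩
      rcases ha with rfl | rfl <;> rcases hb with rfl | rfl
      · exact mem 2 0 _ (by ring)
      · exact mem 1 2 _ (by ring)
      · exact mem 1 2 _ (by ring)
      · exact mem ((k : Zsqrtd (N : ℤ)) + 1) 1 _ (by linear_combination (-1 : Zsqrtd (N : ℤ)) * hs)
    · rw [Ideal.span_le]
      rintro x hx
      simp only [Set.mem_insert_iff, Set.mem_singleton_iff] at hx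
      rcases hx with rfl | rfl
      · exact h8
      · exact h2s
  have hTJ : (Ideal.span {2} * Ideal.span {4, s - 1} : Ideal (Zsqrtd (N : ℤ))) =
      Ideal.span {8, 2 * (s - 1)} := by
    rw [Ideal.span_mul_span']
    congr 1
    rw [Set.singleton_mul, Set.image_insert_eq, Set.image_singleton]
    norm_num
  refine ⟨key.trans hTJ.symm, ?_⟩
  have key3 : (Ideal.span {4, s + 1} : Ideal (Zsqrtd (N : ℤ))) ^ 3 =
      Ideal.span {(8 : Zsqrtd (N : ℤ))} := by
    rw [pow_succ, key, Ideal.span_mul_span']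
    apply le_antisymm
    · rw [Ideal.span_le]
      rintro x ⟨a, ha, b, hb, rfl⟩
      simp only [Set.mem_insert_iff, Set.mem_singleton_iff] at ha hb
      rw [SetLike.mem_coe, Ideal.mem_span_singleton]
      rcases ha with rfl | rfl <;> rcases hb with rfl | rfl
      · exact ⟨4, by norm_num⟩
      · exact ⟨s + 1, rfl⟩
      · exact ⟨s - 1, by ring⟩
      · exact ⟨2 * (k : Zsqrtd (N : ℤ)) + 1, by linear_combination 2 * hs⟩
    · rw [Ideal.span_le]
      rintro x hx
      simp only [Set.mem_singleton_iff] at hx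
      subst hx
      have m8 : (8 : Zsqrtd (N : ℤ)) ∈ ({8, 2 * (s - 1)} : Set (Zsqrtd (N : ℤ))) := by simp
      have m2s : (2 * (s - 1) : Zsqrtd (N : ℤ)) ∈
          ({8, 2 * (s - 1)} : Set (Zsqrtd (N : ℤ))) := by simp
      have m4' : (4 : Zsqrtd (N : ℤ)) ∈ ({4, s + 1} : Set (Zsqrtd (N : ℤ))) := by simp
      have ms' : (s + 1 : Zsqrtd (N : ℤ)) ∈ ({4, s + 1} : Set (Zsqrtd (N : ℤ))) := by simp
      have p2 : (8 * (s + 1) : Zsqrtd (N : ℤ)) ∈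
          Ideal.span (({8, 2 * (s - 1)} : Set (Zsqrtd (N : ℤ))) * {4, s + 1}) :=
        Ideal.subset_span (Set.mul_mem_mul m8 ms')
      have p3 : (2 * (s - 1) * 4 : Zsqrtd (N : ℤ)) ∈
          Ideal.span (({8, 2 * (s - 1)} : Set (Zsqrtd (N : ℤ))) * {4, s + 1}) :=
        Ideal.subset_span (Set.mul_mem_mul m2s m4')
      have p4 : (2 * (s - 1) * (s + 1) : Zsqrtd (N : ℤ)) ∈
          Ideal.span (({8, 2 * (s - 1)} : Set (Zsqrtd (N : ℤ))) * {4, s + 1}) :=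
        Ideal.subset_span (Set.mul_mem_mul m2s ms')
      have h : (8 : Zsqrtd (N : ℤ)) =
          1 * (2 * (s - 1) * (s + 1)) + (-(k : Zsqrtd (N : ℤ))) * (8 * (s + 1)) +
            (k : Zsqrtd (N : ℤ)) * (2 * (s - 1) * 4) := by
        linear_combination (-2 : Zsqrtd (N : ℤ)) * hs
      have hmem : 1 * (2 * (s - 1) * (s + 1)) + (-(k : Zsqrtd (N : ℤ))) * (8 * (s + 1)) +
          (k : Zsqrtd (N : ℤ)) * (2 * (s - 1) * 4) ∈
          Ideal.span (({8, 2 * (s - 1)} : Set (Zsqrtd (N : ℤ))) * {4, s + 1}) :=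
        add_mem (add_mem (Ideal.mul_mem_left _ _ p4) (Ideal.mul_mem_left _ _ p2))
          (Ideal.mul_mem_left _ _ p3)
      rwa [← h] at hmem
  exact ⟨⟨8, key3⟩⟩
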